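/- Let m ≥ 6 and let G be a ladder-like graph on 2m vertices with the edges u_1 v_1 and u_4 v_4 removed. Then for every odd ℓ with 5 ≤ ℓ ≤ 2m − 1, G contains a cycle of length ℓ. -/

import Mathlib

open SimpleGraph

/-- `IsKRegular G k`: every vertex has exactly `k` neighbours. -/
def IsKRegular {V : Type*} (G : SimpleGraph V) (k : ℕ) : Prop :=
  ∀ v : V, (G.neighborSet v).ncard = k

/-- `IsKConnected G k`: `G` has more than `k` vertices and removing any set of
fewer than `k` vertices leaves a connected graph. -/
def IsKConnected {V : Type*} (G : SimpleGraph V) (k : ℕ) : Prop :=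
  k < Nat.card V ∧ ∀ S : Set V, S.ncard < k → (G.induce (Sᶜ : Set V)).Connected

/-- `G` contains a cycle of length `ℓ`. -/
def HasCycleOfLength {V : Type*} (G : SimpleGraph V) (ℓ : ℕ) : Prop :=
  ∃ (v : V) (c : G.Walk v v), c.IsCycle ∧ c.length = ℓ

/-- The ladder-like graph on `2m` vertices: two disjoint `m`-cycles
`u_1,...,u_m` (side `false`) and `v_1,...,v_m` (side `true`), the matching
edges `u_i v_i`, and the two extra edges `u_1 v_4` and `u_4 v_1`.
Vertex `(false, i)` is `u_{i+1}` and `(true, i)` is `v_{i+1}`. -/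
def ladderLike (m : ℕ) [NeZero m] : SimpleGraph (Bool × Fin m) where
  Adj p q :=
    (p.1 = q.1 ∧ p.2 ≠ q.2 ∧ (q.2 = p.2 + 1 ∨ p.2 = q.2 + 1)) ∨
    (p.1 ≠ q.1 ∧ (p.2 = q.2 ∨ (p.2 = 0 ∧ q.2 = 3) ∨ (p.2 = 3 ∧ q.2 = 0)))
  symm := by
    constructor
    rintro ⟨a, i⟩ ⟨b, j⟩ (⟨h1, h2, h3⟩ | ⟨h1, h2⟩)
    · exact Or.inl ⟨h1.symm, h2.symm, h3.symm⟩
    · refine Or.inr ⟨Ne.symm h1, ?_⟩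
      rcases h2 with h | ⟨h, h'⟩ | ⟨h, h'⟩
      · exact Or.inl h.symm
      · exact Or.inr (Or.inr ⟨h', h⟩)
      · exact Or.inr (Or.inl ⟨h', h⟩)
  loopless := by
    constructor
    rintro ⟨a, i⟩ (⟨-, h, -⟩ | ⟨h, -⟩) <;> exact h rfl

/-- The ladder-like graph with the edges `u_1 v_1` and `u_4 v_4` deleted. -/
def ladderLikeMinus (m : ℕ) [NeZero m] : SimpleGraph (Bool × Fin m) :=
  (ladderLike m).deleteEdges
    {s((false, (0 : Fin m)), (true, (0 : Fin m))), s((false, (3 : Fin m)), (true, (3 : Fin m)))}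

section Aux
variable {V : Type*} {G : SimpleGraph V}

def walkAux (G : SimpleGraph V) : (a b : V) → (l : List V) → List.Chain G.Adj a l →
    G.Adj ((a :: l).getLast (by simp)) b → G.Walk a b
  | a, _, [], _, hl => Walk.cons (by simpa using hl) Walk.nil
  | a, b, c :: l, hc, hl =>
      Walk.cons (List.chain_cons.mp hc).1
        (walkAux G c b l (List.chain_cons.mp hc).2 (by simpa [List.getLast_cons] using hl))

lemma walkAux_length (G : SimpleGraph V) : ∀ (a b : V) (l : List V) (hc : List.Chain G.Adj a l)
    (hl : G.Adj ((a :: l).getLast (by simp)) b), (walkAux G a b l hc hl).length = l.length + 1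
  | a, b, [], _, _ => rfl
  | a, b, c :: l, hc, hl => by
      simp [walkAux]
      exact walkAux_length G c b l _ _

lemma walkAux_support (G : SimpleGraph V) : ∀ (a b : V) (l : List V) (hc : List.Chain G.Adj a l)
    (hl : G.Adj ((a :: l).getLast (by simp)) b),
    (walkAux G a b l hc hl).support = a :: l ++ [b]
  | a, b, [], _, _ => rfl
  | a, b, c :: l, hc, hl => by
      simp [walkAux]
      exact walkAux_support G c b l _ _

lemma walkAux_edges_end (G : SimpleGraph V) : ∀ (a b : V) (l : List V) (hc : List.Chain G.Adj a l)
    (hl : G.Adj ((a :: l).getLast (by simp)) b) (u : V), b ∉ a :: l →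
    s(u, b) ∈ (walkAux G a b l hc hl).edges → u = (a :: l).getLast (by simp)
  | a, b, [], _, _, u, hb, he => by
      simp only [walkAux, Walk.edges_cons, Walk.edges_nil, List.mem_singleton] at he
      replace he : s(u, b) = s(a, b) := List.mem_singleton.mp he
      rw [Sym2.eq_iff] at he
      rcases he with ⟨h1, h2⟩ | ⟨h1, h2⟩
      · simpa using h1
      · exact absurd (by simp [h2]) hb
  | a, b, c :: l, hc, hl, u, hb, he => by
      simp only [walkAux, Walk.edges_cons, List.mem_cons] at he
      rcases he with he | he
      · rw [Sym2.eq_iff] at he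
        rcases he with ⟨h1, h2⟩ | ⟨h1, h2⟩
        · exact absurd (by simp [h2]) hb
        · exact absurd (by simp [h2]) hb
      · have := walkAux_edges_end G c b l (List.chain_cons.mp hc).2 _ u (by
          intro h; exact hb (List.mem_cons_of_mem _ h)) he
        rw [this]
        simp [List.getLast_cons]



lemma hasCycle_of_list (G : SimpleGraph V) (L : List V) (h3 : 3 ≤ L.length)
    (hnd : L.Nodup) (hch : L.Chain' G.Adj) (hne : L ≠ [])
    (hcl : G.Adj (L.getLast hne) (L.head hne)) : HasCycleOfLength G L.length := by
  match L, h3 with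
  | a :: x :: y :: l', _ =>
    set l : List V := y :: l' with hldef
    have hlne : l ≠ [] := by simp [hldef]
    have hch1 : G.Adj a x := (List.chain_cons.mp hch).1
    have hch2 : List.Chain G.Adj x l := (List.chain_cons.mp hch).2
    have hadj_last : G.Adj ((x :: l).getLast (by simp)) a := by
      have hlast : (x :: l).getLast (by simp) = (a :: x :: l).getLast (by simp) := by
        simp [List.getLast_cons]
      rw [hlast]; simpa using hcl
    refine ⟨a, Walk.cons hch1 (walkAux G x a l hch2 hadj_last), ?_, ?_⟩
    · rw [Walk.cons_isCycle_iff]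
      constructor
      · apply Walk.IsPath.mk'
        rw [walkAux_support]
        have : (x :: l ++ [a]).Perm (a :: x :: l) := by
          simpa using (List.perm_append_comm (l₁ := x :: l) (l₂ := [a]))
        exact this.symm.nodup hnd
      · intro h
        rw [Sym2.eq_swap] at h
        have ha : a ∉ x :: l := by
          have := hnd; simp only [List.nodup_cons] at this
          simpa using this.1
        have heq := walkAux_edges_end G x a l hch2 hadj_last x ha h
        rw [List.getLast_cons hlne] at heq
        have hx : x ∈ l := by rw [heq]; exact List.getLast_mem hlne
        have := hnd
        simp only [List.nodup_cons] at this
        exact this.2.1 (by simp [hx])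
    · simp [walkAux_length, hldef]

lemma hasCycle_of_fn (G : SimpleGraph V) (f : ℕ → V) (n : ℕ) (h3 : 3 ≤ n)
    (hinj : ∀ i < n, ∀ j < n, f i = f j → i = j)
    (hadj : ∀ i, i + 1 < n → G.Adj (f i) (f (i + 1)))
    (hcl : G.Adj (f (n - 1)) (f 0)) : HasCycleOfLength G n := by
  have hne : (List.range n).map f ≠ [] := by
    simp only [ne_eq, List.map_eq_nil_iff, List.range_eq_nil]
    omega
  have hlen : ((List.range n).map f).length = n := by simp
  have hnd : ((List.range n).map f).Nodup := by
    refine List.Nodup.map_on ?_ List.nodup_range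
    intro x hx y hy hxy
    exact hinj x (List.mem_range.mp hx) y (List.mem_range.mp hy) hxy
  have hch : ((List.range n).map f).Chain' G.Adj := by
    show List.IsChain G.Adj _
    rw [List.isChain_map]
    obtain ⟨n', rfl⟩ : ∃ n', n = n' + 1 := ⟨n - 1, by omega⟩
    rw [List.isChain_range_succ]
    intro i hi
    exact hadj i (by omega)
  have hcl' : G.Adj (((List.range n).map f).getLast hne) (((List.range n).map f).head hne) := by
    have h1 : ((List.range n).map f).getLast hne = f (n - 1) := by
      rw [List.getLast_eq_getElem]
      simp [hlen]
    have h2 : ((List.range n).map f).head hne = f 0 := by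
      rw [List.head_eq_getElem_zero]
      simp only [List.getElem_map, List.getElem_range]
    rw [h1, h2]
    exact hcl
  have := hasCycle_of_list G ((List.range n).map f) (by omega) hnd hch hne hcl'
  rwa [hlen] at this

end Aux

section LadderAux
open Fin.NatCast
variable {m : ℕ} [NeZero m]

lemma fin_cast_inj {c d : ℕ} (hc : c < m) (hd : d < m) (h : (c : Fin m) = (d : Fin m)) : c = d := by
  have := congrArg Fin.val h
  rwa [Fin.val_natCast, Fin.val_natCast, Nat.mod_eq_of_lt hc, Nat.mod_eq_of_lt hd] at this


lemma fin3 (hm : 6 ≤ m) : ((3 : ℕ) : Fin m) = (3 : Fin m) := by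
  have : (3 : Fin m).val = 3 % m := rfl
  apply Fin.ext
  rw [Fin.val_natCast, this]

lemma fin0 : ((0 : ℕ) : Fin m) = (0 : Fin m) := by
  simp


lemma cast_ne {c d : ℕ} (hc : c < m) (hd : d < m) (h : c ≠ d) : (c : Fin m) ≠ (d : Fin m) :=
  fun hh => h (fin_cast_inj hc hd hh)

lemma not_deleted {p q : Bool × Fin m} (h : p.2 ≠ q.2 ∨ (p.2 ≠ 0 ∧ p.2 ≠ 3)) :
    s(p, q) ∉ ({s(((false : Bool), (0 : Fin m)), ((true : Bool), (0 : Fin m))),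
      s(((false : Bool), (3 : Fin m)), ((true : Bool), (3 : Fin m)))} :
      Set (Sym2 (Bool × Fin m))) := by
  intro hmem
  simp only [Set.mem_insert_iff, Set.mem_singleton_iff, Sym2.eq_iff, Prod.ext_iff] at hmem
  rcases hmem with (⟨⟨-, h1⟩, ⟨-, h2⟩⟩ | ⟨⟨-, h1⟩, ⟨-, h2⟩⟩) | (⟨⟨-, h1⟩, ⟨-, h2⟩⟩ | ⟨⟨-, h1⟩, ⟨-, h2⟩⟩) <;>
    rcases h with h | ⟨h0, h3⟩ <;> simp_all

lemma fin_ne_03 (hm : 6 ≤ m) {c : ℕ} (hc : c < m) (h0 : c ≠ 0) (h3 : c ≠ 3) :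
    (c : Fin m) ≠ 0 ∧ (c : Fin m) ≠ 3 := by
  constructor
  · rw [← fin0]; exact cast_ne hc (by omega) h0
  · rw [← fin3 hm]; exact cast_ne hc (by omega) h3

lemma adj_step (hm : 6 ≤ m) (b : Bool) (c d : ℕ) (hd : d < m) (hc : c < m)
    (h : d = c + 1 ∨ (d = 0 ∧ c = m - 1)) :
    (ladderLikeMinus m).Adj (b, (c : Fin m)) (b, (d : Fin m)) := by
  rw [ladderLikeMinus, SimpleGraph.deleteEdges_adj]
  have hne : c ≠ d := by omega
  refine ⟨Or.inl ⟨rfl, cast_ne hc hd hne, Or.inl ?_⟩, not_deleted (Or.inl (cast_ne hc hd hne))⟩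
  show (d : Fin m) = (c : Fin m) + 1
  rcases h with rfl | ⟨rfl, rfl⟩
  · push_cast
    ring
  · rw [show ((m - 1 : ℕ) : Fin m) + 1 = (((m - 1) + 1 : ℕ) : Fin m) by push_cast; ring]
    rw [show m - 1 + 1 = m by omega, Fin.natCast_self, Nat.cast_zero]

lemma adj_rung (hm : 6 ≤ m) (c : ℕ) (hc : c < m) (h0 : c ≠ 0) (h3 : c ≠ 3) :
    (ladderLikeMinus m).Adj (false, (c : Fin m)) (true, (c : Fin m)) := by
  rw [ladderLikeMinus, SimpleGraph.deleteEdges_adj]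
  exact ⟨Or.inr ⟨by simp, Or.inl rfl⟩, not_deleted (Or.inr (fin_ne_03 hm hc h0 h3))⟩

lemma adj_cross_a (hm : 6 ≤ m) :
    (ladderLikeMinus m).Adj (false, ((0 : ℕ) : Fin m)) (true, ((3 : ℕ) : Fin m)) := by
  rw [ladderLikeMinus, SimpleGraph.deleteEdges_adj]
  exact ⟨Or.inr ⟨by simp, Or.inr (Or.inl ⟨by simp, fin3 hm⟩)⟩,
    not_deleted (Or.inl (cast_ne (by omega) (by omega) (by omega)))⟩

lemma adj_cross_b (hm : 6 ≤ m) :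
    (ladderLikeMinus m).Adj (true, ((0 : ℕ) : Fin m)) (false, ((3 : ℕ) : Fin m)) := by
  rw [ladderLikeMinus, SimpleGraph.deleteEdges_adj]
  exact ⟨Or.inr ⟨by simp, Or.inr (Or.inl ⟨by simp, fin3 hm⟩)⟩,
    not_deleted (Or.inl (cast_ne (by omega) (by omega) (by omega)))⟩


lemma hasCycle_of_fn2 {m : ℕ} [NeZero m] (G : SimpleGraph (Bool × Fin m))
    (s : ℕ → Bool) (t : ℕ → ℕ) (n : ℕ) (h3 : 3 ≤ n)
    (hbd : ∀ i < n, t i < m)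
    (hinj : ∀ i < n, ∀ j < n, s i = s j → t i = t j → i = j)
    (hadj : ∀ i, i + 1 < n → G.Adj (s i, (t i : Fin m)) (s (i + 1), (t (i + 1) : Fin m)))
    (hcl : G.Adj (s (n - 1), (t (n - 1) : Fin m)) (s 0, (t 0 : Fin m))) :
    HasCycleOfLength G n := by
  refine hasCycle_of_fn G (fun i => (s i, (t i : Fin m))) n h3 ?_ hadj hcl
  intro i hi j hj hij
  rw [Prod.ext_iff] at hij
  exact hinj i hi j hj hij.1 (fin_cast_inj (hbd i hi) (hbd j hj) hij.2)

lemma cyc5 {m : ℕ} [NeZero m] (hm : 6 ≤ m) : HasCycleOfLength (ladderLikeMinus m) 5 := by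
  classical
  set s : ℕ → Bool := fun i => decide (1 ≤ i ∧ i ≤ 3) with hs
  set t : ℕ → ℕ := fun i => if i = 0 then 0 else if i ≤ 3 then 4 - i else 1 with ht
  refine hasCycle_of_fn2 (ladderLikeMinus m) s t 5 (by omega) ?_ ?_ ?_ ?_
  · intro i hi
    simp only [ht]
    split_ifs <;> omega
  · intro i hi j hj hseq hteq
    have hs' : (1 ≤ i ∧ i ≤ 3) ↔ (1 ≤ j ∧ j ≤ 3) := decide_eq_decide.mp hseq
    simp only [ht] at hteq
    split_ifs at hteq <;> omega
  · intro i hi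
    have hi4 : i < 4 := by omega
    interval_cases i
    · have e1 : s 0 = false := by simp [hs]
      have e2 : s 1 = true := by simp [hs]
      have e3 : t 0 = 0 := by simp [ht]
      have e4 : t 1 = 3 := by simp [ht]
      rw [e1, e2, e3, e4]
      exact adj_cross_a hm
    · have e1 : s 1 = true := by simp [hs]
      have e2 : s 2 = true := by simp [hs]
      have e3 : t 1 = 3 := by simp [ht]
      have e4 : t 2 = 2 := by simp [ht]
      rw [e1, e2, e3, e4]
      exact (adj_step hm true 2 3 (by omega) (by omega) (Or.inl rfl)).symm
    · have e1 : s 2 = true := by simp [hs]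
      have e2 : s 3 = true := by simp [hs]
      have e3 : t 2 = 2 := by simp [ht]
      have e4 : t 3 = 1 := by simp [ht]
      rw [e1, e2, e3, e4]
      exact (adj_step hm true 1 2 (by omega) (by omega) (Or.inl rfl)).symm
    · have e1 : s 3 = true := by simp [hs]
      have e2 : s 4 = false := by simp [hs]
      have e3 : t 3 = 1 := by simp [ht]
      have e4 : t 4 = 1 := by simp [ht]
      rw [e1, e2, e3, e4]
      exact (adj_rung hm 1 (by omega) (by omega) (by omega)).symm
  · have e1 : s 4 = false := by simp [hs]
    have e2 : s 0 = false := by simp [hs]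
    have e3 : t 4 = 1 := by simp [ht]
    have e4 : t 0 = 0 := by simp [ht]
    show (ladderLikeMinus m).Adj (s 4, ((t 4 : ℕ) : Fin m)) (s 0, ((t 0 : ℕ) : Fin m))
    rw [e1, e2, e3, e4]
    exact (adj_step hm false 0 1 (by omega) (by omega) (Or.inl rfl)).symm

lemma cycMid {m : ℕ} [NeZero m] (hm : 6 ≤ m) (k : ℕ) (hk5 : 5 ≤ k) (hkm : k ≤ m) :
    HasCycleOfLength (ladderLikeMinus m) (2 * k - 3) := by
  classical
  set s : ℕ → Bool := fun i => decide (k ≤ i) with hs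
  set t : ℕ → ℕ := fun i => if i < k then i else 2 * k - 1 - i with ht
  refine hasCycle_of_fn2 (ladderLikeMinus m) s t (2 * k - 3) (by omega) ?_ ?_ ?_ ?_
  · intro i hi
    simp only [ht]
    split_ifs <;> omega
  · intro i hi j hj hseq hteq
    have hs' : (k ≤ i) ↔ (k ≤ j) := decide_eq_decide.mp hseq
    simp only [ht] at hteq
    split_ifs at hteq <;> omega
  · intro i hi
    rcases lt_trichotomy (i + 1) k with hik | hik | hik
    · have e1 : s i = false := by simp only [hs, decide_eq_false_iff_not]; omega
      have e2 : s (i + 1) = false := by simp only [hs, decide_eq_false_iff_not]; omega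
      have e3 : t i = i := by simp only [ht]; rw [if_pos]; omega
      have e4 : t (i + 1) = i + 1 := by simp only [ht]; rw [if_pos hik]
      rw [e1, e2, e3, e4]
      exact adj_step hm false i (i + 1) (by omega) (by omega) (Or.inl rfl)
    · have e1 : s i = false := by simp only [hs, decide_eq_false_iff_not]; omega
      have e2 : s (i + 1) = true := by simp only [hs, decide_eq_true_eq]; omega
      have e3 : t i = i := by simp only [ht]; rw [if_pos]; omega
      have e4 : t (i + 1) = i := by simp only [ht]; rw [if_neg] <;> omega
      rw [e1, e2, e3, e4]
      exact adj_rung hm i (by omega) (by omega) (by omega)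
    · have e1 : s i = true := by simp only [hs, decide_eq_true_eq]; omega
      have e2 : s (i + 1) = true := by simp only [hs, decide_eq_true_eq]; omega
      have e3 : t i = 2 * k - 1 - i := by simp only [ht]; rw [if_neg]; omega
      have e4 : t (i + 1) = 2 * k - 2 - i := by
        simp only [ht]; rw [if_neg] <;> omega
      rw [e1, e2, e3, e4]
      have h5 : 2 * k - 1 - i = (2 * k - 2 - i) + 1 := by omega
      rw [h5]
      exact (adj_step hm true (2 * k - 2 - i) (2 * k - 2 - i + 1) (by omega) (by omega)
        (Or.inl rfl)).symm
  · have e1 : s (2 * k - 3 - 1) = true := by simp only [hs, decide_eq_true_eq]; omega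
    have e2 : s 0 = false := by simp only [hs, decide_eq_false_iff_not]; omega
    have e3 : t (2 * k - 3 - 1) = 3 := by simp only [ht]; rw [if_neg] <;> omega
    have e4 : t 0 = 0 := by simp only [ht]; rw [if_pos]; omega
    rw [e1, e2, e3, e4]
    exact (adj_cross_a hm).symm

lemma cycMax {m : ℕ} [NeZero m] (hm : 6 ≤ m) :
    HasCycleOfLength (ladderLikeMinus m) (2 * m - 1) := by
  classical
  set s : ℕ → Bool := fun i => decide (3 ≤ i ∧ i ≤ m + 1) with hs
  set t : ℕ → ℕ := fun i =>
    if i < 3 then i else if i ≤ m then i - 1 else if i = m + 1 then 0 else i - m + 1 with ht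
  refine hasCycle_of_fn2 (ladderLikeMinus m) s t (2 * m - 1) (by omega) ?_ ?_ ?_ ?_
  · intro i hi
    simp only [ht]
    split_ifs <;> omega
  · intro i hi j hj hseq hteq
    have hs' : (3 ≤ i ∧ i ≤ m + 1) ↔ (3 ≤ j ∧ j ≤ m + 1) := decide_eq_decide.mp hseq
    simp only [ht] at hteq
    split_ifs at hteq <;> omega
  · intro i hi
    rcases Nat.lt_or_ge (i + 1) 3 with hc | hc
    · have e1 : s i = false := by simp only [hs, decide_eq_false_iff_not]; omega
      have e2 : s (i + 1) = false := by simp only [hs, decide_eq_false_iff_not]; omega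
      have e3 : t i = i := by simp only [ht]; rw [if_pos]; omega
      have e4 : t (i + 1) = i + 1 := by simp only [ht]; rw [if_pos hc]
      rw [e1, e2, e3, e4]
      exact adj_step hm false i (i + 1) (by omega) (by omega) (Or.inl rfl)
    rcases Nat.eq_or_lt_of_le hc with hc2 | hc2
    · -- i = 2 : rung at 2
      have hi2 : i = 2 := by omega
      subst hi2
      have e1 : s 2 = false := by simp [hs]
      have e2 : s 3 = true := by simp only [hs, decide_eq_true_eq]; omega
      have e3 : t 2 = 2 := by simp [ht]
      have e4 : t 3 = 2 := by simp only [ht]; rw [if_neg (by omega), if_pos (by omega)]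
      rw [e1, e2, e3, e4]
      exact adj_rung hm 2 (by omega) (by omega) (by omega)
    rcases Nat.lt_or_ge (i + 1) (m + 1) with hc3 | hc3
    · -- 3 ≤ i, i+1 ≤ m : true side ascending
      have e1 : s i = true := by simp only [hs, decide_eq_true_eq]; omega
      have e2 : s (i + 1) = true := by simp only [hs, decide_eq_true_eq]; omega
      have e3 : t i = i - 1 := by simp only [ht]; rw [if_neg (by omega), if_pos (by omega)]
      have e4 : t (i + 1) = i := by
        simp only [ht]; rw [if_neg (by omega), if_pos (by omega)]; omega
      rw [e1, e2, e3, e4]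
      have h5 : i = (i - 1) + 1 := by omega
      nth_rewrite 2 [h5]
      exact adj_step hm true (i - 1) (i - 1 + 1) (by omega) (by omega) (Or.inl rfl)
    rcases Nat.eq_or_lt_of_le hc3 with hc4 | hc4
    · -- i = m : (true, m-1) → (true, 0) wrap
      have him : i = m := by omega
      have e1 : s i = true := by simp only [hs, decide_eq_true_eq]; omega
      have e2 : s (i + 1) = true := by simp only [hs, decide_eq_true_eq]; omega
      have e3 : t i = m - 1 := by
        simp only [ht]; rw [if_neg (by omega), if_pos (by omega)]; omega
      have e4 : t (i + 1) = 0 := by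
        simp only [ht]; rw [if_neg (by omega), if_neg (by omega), if_pos (by omega)]
      rw [e1, e2, e3, e4]
      exact adj_step hm true (m - 1) 0 (by omega) (by omega) (Or.inr ⟨rfl, rfl⟩)
    rcases Nat.eq_or_lt_of_le hc4 with hc5 | hc5
    · -- i = m + 1 : (true, 0) → (false, 3) cross
      have him : i = m + 1 := by omega
      have e1 : s i = true := by simp only [hs, decide_eq_true_eq]; omega
      have e2 : s (i + 1) = false := by simp only [hs, decide_eq_false_iff_not]; omega
      have e3 : t i = 0 := by
        simp only [ht]; rw [if_neg (by omega), if_neg (by omega), if_pos (by omega)]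
      have e4 : t (i + 1) = 3 := by
        simp only [ht]
        rw [if_neg (by omega), if_neg (by omega), if_neg (by omega)]
        omega
      rw [e1, e2, e3, e4]
      exact adj_cross_b hm
    · -- i ≥ m + 2 : false side ascending
      have e1 : s i = false := by simp only [hs, decide_eq_false_iff_not]; omega
      have e2 : s (i + 1) = false := by simp only [hs, decide_eq_false_iff_not]; omega
      have e3 : t i = i - m + 1 := by
        simp only [ht]; rw [if_neg (by omega), if_neg (by omega), if_neg (by omega)]
      have e4 : t (i + 1) = i - m + 2 := by
        simp only [ht]
        rw [if_neg (by omega), if_neg (by omega), if_neg (by omega)]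
        omega
      rw [e1, e2, e3, e4]
      have h5 : i - m + 2 = (i - m + 1) + 1 := by omega
      rw [h5]
      exact adj_step hm false (i - m + 1) (i - m + 1 + 1) (by omega) (by omega) (Or.inl rfl)
  · have e1 : s (2 * m - 1 - 1) = false := by simp only [hs, decide_eq_false_iff_not]; omega
    have e2 : s 0 = false := by simp only [hs, decide_eq_false_iff_not]; omega
    have e3 : t (2 * m - 1 - 1) = m - 1 := by
      simp only [ht]
      rw [if_neg (by omega), if_neg (by omega), if_neg (by omega)]
      omega
    have e4 : t 0 = 0 := by simp only [ht]; rw [if_pos]; omega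
    rw [e1, e2, e3, e4]
    exact adj_step hm false (m - 1) 0 (by omega) (by omega) (Or.inr ⟨rfl, rfl⟩)

end LadderAux

theorem ladderLikeMinus_odd_cycles (m : ℕ) [NeZero m] (hm : 6 ≤ m) :
    ∀ ℓ : ℕ, Odd ℓ → 5 ≤ ℓ → ℓ ≤ 2 * m - 1 →
      HasCycleOfLength (ladderLikeMinus m) ℓ := by
  intro ℓ hodd h5 hub
  obtain ⟨j, hj⟩ := hodd
  by_cases h5' : ℓ = 5
  · rw [h5']
    exact cyc5 hm
  by_cases hmax : ℓ = 2 * m - 1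
  · rw [hmax]
    exact cycMax hm
  · have hl7 : 7 ≤ ℓ := by omega
    have hl3 : ℓ ≤ 2 * m - 3 := by omega
    have : ℓ = 2 * (j + 2) - 3 := by omega
    rw [this]
    exact cycMid hm (j + 2) (by omega) (by omega)
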